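/- arXiv:2604.03789 — 3 statements merged into one kernel-verified Lean document; each statement's English description precedes it below -/
import Mathlib

section
/- If a Noetherian local ring R is complete with respect to the M-adic topology, then R is quasi-complete: for every decreasing sequence {A_n} of ideals of R and each integer k ≥ 1, there exists s_k with A_{s_k} ⊆ (⋂_n A_n) + M^k. -/
/-- A local ring `R` is quasi-complete if for any antitone sequence of ideals
`A : ℕ → Ideal R` and each `k : ℕ`, there exists `s` such that
`A s ≤ (⨅ n, A n) ⊔ (IsLocalRing.maximalIdeal R) ^ k`. -/
def IsQuasiComplete (R : Type*) [CommRing R] [IsLocalRing R] : Prop :=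
  ∀ A : ℕ → Ideal R, Antitone A → ∀ k : ℕ, ∃ s,
    A s ≤ (⨅ n, A n) ⊔ (IsLocalRing.maximalIdeal R) ^ k

/-- A local ring `R` is weakly quasi-complete if the above holds for antitone
sequences with `⨅ n, A n = ⊥`. -/
def IsWeaklyQuasiComplete (R : Type*) [CommRing R] [IsLocalRing R] : Prop :=
  ∀ A : ℕ → Ideal R, Antitone A → (⨅ n, A n) = ⊥ → ∀ k : ℕ, ∃ s,
    A s ≤ (IsLocalRing.maximalIdeal R) ^ k

section Auxiliary

open IsLocalRing

variable {R : Type*} [CommRing R]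

/-- Quotient by a power of the maximal ideal is an Artinian module. -/
lemma QC.isArtinian_quot_pow [IsLocalRing R] [IsNoetherianRing R] (j : ℕ) :
    IsArtinian R (R ⧸ (maximalIdeal R ^ j : Ideal R)) := by
  induction j with
  | zero =>
    have hs : Subsingleton (R ⧸ (maximalIdeal R ^ 0 : Ideal R)) := by
      rw [pow_zero, Ideal.one_eq_top]
      exact Submodule.Quotient.subsingleton_iff.mpr rfl
    infer_instance
  | succ j ih =>
    set I : Ideal R := maximalIdeal R ^ (j + 1) with hIdef
    set N : Submodule R (R ⧸ I) := Submodule.map I.mkQ (maximalIdeal R ^ j : Ideal R) with hNdef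
    refine (isArtinian_iff_submodule_quotient N).mpr ⟨?_, ?_⟩
    · -- `N` is a finite module killed by the maximal ideal
      have htor : Module.IsTorsionBySet R N (maximalIdeal R : Set R) := by
        intro x a
        obtain ⟨y, hy, hxy⟩ := Submodule.mem_map.mp x.2
        apply Subtype.ext
        show (a : R) • (x : R ⧸ I) = 0
        rw [← hxy, ← map_smul]
        have : (a : R) • y ∈ I := by
          rw [hIdef, pow_succ']
          exact Ideal.mul_mem_mul a.2 hy
        simpa using (Submodule.Quotient.mk_eq_zero I).mpr this
      letI := htor.module
      haveI : IsScalarTower R (R ⧸ maximalIdeal R) N := htor.isScalarTower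
      haveI : Module.Finite R N := ⟨(Submodule.fg_top N).mpr (IsNoetherian.noetherian N)⟩
      haveI : Module.Finite (R ⧸ maximalIdeal R) N :=
        Module.Finite.of_restrictScalars_finite R (R ⧸ maximalIdeal R) N
      haveI : IsArtinianRing (R ⧸ maximalIdeal R) :=
        @DivisionRing.instIsArtinianRing _ (Ideal.Quotient.field (maximalIdeal R)).toDivisionRing
      haveI hNa : IsArtinian (R ⧸ maximalIdeal R) N := isArtinian_of_fg_of_artinian'
      -- transfer Artinianness back along the surjection `R → R ⧸ maximalIdeal R`
      let e : Submodule R N ↪o Submodule (R ⧸ maximalIdeal R) N :=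
        OrderEmbedding.ofMapLEIff
          (fun p => { carrier := p
                      add_mem' := fun h1 h2 => p.add_mem h1 h2
                      zero_mem' := p.zero_mem
                      smul_mem' := by
                        rintro ⟨b⟩ x hx
                        exact p.smul_mem b hx })
          (fun p q => Iff.rfl)
      exact e.ltEmbedding.isWellFounded
    · haveI := ih
      exact isArtinian_of_linearEquiv
        (Submodule.quotientQuotientEquivQuotient I (maximalIdeal R ^ j)
          (Ideal.pow_le_pow_right (Nat.le_succ j))).symm

/-- Krull: in a Noetherian local ring, every ideal is closed for the adic topology. -/
lemma QC.mem_of_forall_mem_sup_pow [IsLocalRing R] [IsNoetherianRing R]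
    (C : Ideal R) (L : R) (h : ∀ i : ℕ, L ∈ C ⊔ maximalIdeal R ^ i) : L ∈ C := by
  by_cases hC : C = ⊤
  · simp [hC]
  haveI : Nontrivial (R ⧸ C) := Ideal.Quotient.nontrivial_iff.mpr hC
  haveI : IsLocalRing (R ⧸ C) :=
    IsLocalRing.of_surjective' (Ideal.Quotient.mk C) Ideal.Quotient.mk_surjective
  set I : Ideal (R ⧸ C) := Ideal.map (Ideal.Quotient.mk C) (maximalIdeal R) with hIdef
  have hI : I ≠ ⊤ := by
    intro htop
    have hCle : C ≤ maximalIdeal R := IsLocalRing.le_maximalIdeal hC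
    have h2 := congrArg (Ideal.comap (Ideal.Quotient.mk C)) htop
    rw [hIdef, Ideal.comap_map_of_surjective _ Ideal.Quotient.mk_surjective,
      Ideal.comap_top] at h2
    have h3 : maximalIdeal R ⊔ Ideal.comap (Ideal.Quotient.mk C) ⊥ = maximalIdeal R := by
      refine sup_eq_left.mpr ?_
      intro y hy
      have : Ideal.Quotient.mk C y = 0 := hy
      exact hCle (Ideal.Quotient.eq_zero_iff_mem.mp this)
    rw [h3] at h2
    exact (IsLocalRing.maximalIdeal.isMaximal R).ne_top h2
  have hbot : ⨅ i : ℕ, I ^ i = ⊥ := Ideal.iInf_pow_eq_bot_of_isLocalRing I hI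
  have hmem : ∀ i : ℕ, Ideal.Quotient.mk C L ∈ I ^ i := by
    intro i
    obtain ⟨c, hc, m, hm, hcm⟩ := Submodule.mem_sup.mp (h i)
    have hLm : Ideal.Quotient.mk C L = Ideal.Quotient.mk C m := by
      rw [← hcm, map_add, Ideal.Quotient.eq_zero_iff_mem.mpr hc, zero_add]
    rw [hLm, hIdef, ← Ideal.map_pow]
    exact Ideal.mem_map_of_mem _ hm
  have : Ideal.Quotient.mk C L = 0 := by
    have h4 : Ideal.Quotient.mk C L ∈ ⨅ i : ℕ, I ^ i := Submodule.mem_iInf _ |>.mpr hmem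
    rwa [hbot, Submodule.mem_bot] at h4
  exact Ideal.Quotient.eq_zero_iff_mem.mp this

/-- Stabilization of antitone sequences of ideals modulo a fixed power of the maximal ideal. -/
lemma QC.stab [IsLocalRing R] [IsNoetherianRing R] (A : ℕ → Ideal R) (hA : Antitone A) (j : ℕ) :
    ∃ Nj : ℕ, ∀ m, Nj ≤ m → A m ⊔ maximalIdeal R ^ j = A Nj ⊔ maximalIdeal R ^ j := by
  haveI := QC.isArtinian_quot_pow (R := R) j
  obtain ⟨Nj, hNj⟩ := IsArtinian.monotone_stabilizes
    (R := R) (M := R ⧸ (maximalIdeal R ^ j : Ideal R))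
    ⟨fun n => OrderDual.toDual (Submodule.map (maximalIdeal R ^ j : Ideal R).mkQ (A n)),
     fun m n h => OrderDual.toDual_le_toDual.mpr (Submodule.map_mono (hA h))⟩
  refine ⟨Nj, fun m hm => ?_⟩
  have heq : Submodule.map (maximalIdeal R ^ j : Ideal R).mkQ (A Nj)
      = Submodule.map (maximalIdeal R ^ j : Ideal R).mkQ (A m) := by
    exact hNj m hm
  have h1 := congrArg (Submodule.comap (maximalIdeal R ^ j : Ideal R).mkQ) heq
  rw [Submodule.comap_map_mkQ, Submodule.comap_map_mkQ] at h1
  rw [sup_comm (A m), sup_comm (A Nj)]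
  exact h1.symm

end Auxiliary

open IsLocalRing in
/-- Chevalley: a complete Noetherian local ring is quasi-complete. -/
theorem complete_implies_quasiComplete
    (R : Type*) [CommRing R] [IsLocalRing R] [IsNoetherianRing R]
    [IsAdicComplete (IsLocalRing.maximalIdeal R) R] : IsQuasiComplete R := by
  intro A hA k
  choose N hN using QC.stab A hA
  set N' : ℕ → ℕ := fun j => (Finset.range (j + 1)).sup N with hN'def
  have hNle : ∀ j, N j ≤ N' j := fun j => Finset.le_sup (Finset.self_mem_range_succ j)
  have hN'mono : Monotone N' := fun a b h =>
    Finset.sup_mono (Finset.range_subset_range.mpr (by omega))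
  -- the stable value is the smallest value of `A n ⊔ M ^ j`
  have hmin : ∀ j n, A (N' j) ≤ A n ⊔ maximalIdeal R ^ j := by
    intro j n
    have h1 : A (N' j) ⊔ maximalIdeal R ^ j = A (N j) ⊔ maximalIdeal R ^ j :=
      hN j (N' j) (hNle j)
    have h2 : A (max n (N j)) ⊔ maximalIdeal R ^ j = A (N j) ⊔ maximalIdeal R ^ j :=
      hN j _ (le_max_right _ _)
    calc A (N' j) ≤ A (N' j) ⊔ maximalIdeal R ^ j := le_sup_left
      _ = A (max n (N j)) ⊔ maximalIdeal R ^ j := by rw [h1, h2]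
      _ ≤ A n ⊔ maximalIdeal R ^ j := sup_le_sup_right (hA (le_max_left n (N j))) _
  refine ⟨N' k, fun x hx => ?_⟩
  -- successive approximation: a sequence staying in the `A (N' (k+i))` with small differences
  have key : ∀ (i : ℕ) (y : R), y ∈ A (N' (k + i)) →
      ∃ z, z ∈ A (N' (k + i + 1)) ∧ y - z ∈ maximalIdeal R ^ (k + i) := by
    intro i y hy
    have h := hmin (k + i) (N' (k + i + 1)) hy
    rw [Submodule.mem_sup] at h
    obtain ⟨z, hz, m, hm, hzm⟩ := h
    exact ⟨z, hz, by rw [← hzm]; simpa using hm⟩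
  let a : ∀ i : ℕ, {y : R // y ∈ A (N' (k + i))} := fun i =>
    Nat.rec (motive := fun i => {y : R // y ∈ A (N' (k + i))}) ⟨x, hx⟩
      (fun i p => ⟨(key i p.1 p.2).choose, (key i p.1 p.2).choose_spec.1⟩) i
  have ha : ∀ i, (a i).1 - (a (i + 1)).1 ∈ maximalIdeal R ^ (k + i) := fun i =>
    (key i (a i).1 (a i).2).choose_spec.2
  have htel : ∀ i d, (a i).1 - (a (i + d)).1 ∈ maximalIdeal R ^ (k + i) := by
    intro i d
    induction d with
    | zero => simp
    | succ d ihd =>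
      have h2 : (a (i + d)).1 - (a (i + d + 1)).1 ∈ maximalIdeal R ^ (k + i) :=
        Ideal.pow_le_pow_right (by omega) (ha (i + d))
      have h3 := Submodule.add_mem _ ihd h2
      show (a i).1 - (a (i + d + 1)).1 ∈ _
      simpa [sub_add_sub_cancel] using h3
  have hsmul : ∀ J : Ideal R, J • (⊤ : Submodule R R) = J := fun J => by
    rw [smul_eq_mul, Ideal.mul_top]
  have hf : ∀ {m n : ℕ}, m ≤ n → (a (m - k)).1 ≡ (a (n - k)).1
      [SMOD (maximalIdeal R ^ m • ⊤ : Submodule R R)] := by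
    intro m n hmn
    rw [SModEq.sub_mem, hsmul]
    have h1 := htel (m - k) (n - k - (m - k))
    rw [show m - k + (n - k - (m - k)) = n - k by omega] at h1
    exact Ideal.pow_le_pow_right (by omega) h1
  obtain ⟨L, hL⟩ := IsPrecomplete.prec inferInstance hf
  have hL' : ∀ n, (a (n - k)).1 - L ∈ maximalIdeal R ^ n := fun n => by
    have := hL n; rwa [SModEq.sub_mem, hsmul] at this
  have hLB : ∀ n, L ∈ A n := by
    intro n
    apply QC.mem_of_forall_mem_sup_pow
    intro i
    have hmem : (a i).1 ∈ A n ⊔ maximalIdeal R ^ i :=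
      (sup_le_sup_left (Ideal.pow_le_pow_right (by omega)) _ :
        A n ⊔ maximalIdeal R ^ (k + i) ≤ A n ⊔ maximalIdeal R ^ i) (hmin (k + i) n (a i).2)
    have hdiff : (a i).1 - L ∈ A n ⊔ maximalIdeal R ^ i := by
      have h5 := hL' (k + i)
      rw [show k + i - k = i by omega] at h5
      exact Submodule.mem_sup_right (Ideal.pow_le_pow_right (by omega) h5)
    simpa using Submodule.sub_mem _ hmem hdiff
  have hLB' : L ∈ ⨅ n, A n := Submodule.mem_iInf _ |>.mpr hLB
  have hxL : x - L ∈ maximalIdeal R ^ k := by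
    have h6 := hL' k
    rwa [Nat.sub_self] at h6
  have hx' : x = L + (x - L) := by ring
  rw [hx']
  exact Submodule.add_mem _ (Submodule.mem_sup_left hLB') (Submodule.mem_sup_right hxL)
end

section
/- A Noetherian local ring R is quasi-complete if and only if for every proper ideal I of R, the quotient R/I is weakly quasi-complete. -/
lemma aux_map_maximalIdeal {R : Type*} [CommRing R] [IsLocalRing R] (I : Ideal R) (hI : I ≠ ⊤)
    [IsLocalRing (R ⧸ I)] :
    Ideal.map (Ideal.Quotient.mk I) (IsLocalRing.maximalIdeal R)
      = IsLocalRing.maximalIdeal (R ⧸ I) := by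
  apply le_antisymm
  · apply IsLocalRing.le_maximalIdeal
    intro htop
    have h := Ideal.comap_map_of_surjective (Ideal.Quotient.mk I)
      Ideal.Quotient.mk_surjective (IsLocalRing.maximalIdeal R)
    rw [htop, ← RingHom.ker_eq_comap_bot, Ideal.mk_ker, Ideal.comap_top] at h
    have hle : I ≤ IsLocalRing.maximalIdeal R := IsLocalRing.le_maximalIdeal hI
    have : IsLocalRing.maximalIdeal R = ⊤ := by
      rw [h, sup_eq_left.mpr hle]
    exact (IsLocalRing.maximalIdeal.isMaximal R).ne_top this
  · intro x hx
    obtain ⟨y, rfl⟩ := Ideal.Quotient.mk_surjective x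
    have hy : y ∈ IsLocalRing.maximalIdeal R := by
      intro hy
      exact hx (hy.map (Ideal.Quotient.mk I))
    exact Ideal.mem_map_of_mem _ hy


/-- A Noetherian local ring `R` is quasi-complete iff every proper quotient `R ⧸ I`
is weakly quasi-complete. -/
theorem isQuasiComplete_iff_quotients_weaklyQuasiComplete
    (R : Type*) [CommRing R] [IsLocalRing R] [IsNoetherianRing R] :
    IsQuasiComplete R ↔
      ∀ (I : Ideal R) (hI : I ≠ ⊤),
        haveI : Nontrivial (R ⧸ I) := Ideal.Quotient.nontrivial_iff.mpr hI
        haveI : IsLocalRing (R ⧸ I) :=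
          IsLocalRing.of_surjective' (Ideal.Quotient.mk I) Ideal.Quotient.mk_surjective
        IsWeaklyQuasiComplete (R ⧸ I) := by
  constructor
  · intro hqc I hI
    haveI : Nontrivial (R ⧸ I) := Ideal.Quotient.nontrivial_iff.mpr hI
    haveI : IsLocalRing (R ⧸ I) :=
      IsLocalRing.of_surjective' (Ideal.Quotient.mk I) Ideal.Quotient.mk_surjective
    intro B hB hBinf k
    set f := Ideal.Quotient.mk I
    have hIle : I ≤ IsLocalRing.maximalIdeal R := IsLocalRing.le_maximalIdeal hI
    set A : ℕ → Ideal R := fun n => (B n).comap f with hA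
    have hAanti : Antitone A := fun m n h => Ideal.comap_mono (hB h)
    have hAinf : (⨅ n, A n) = I := by
      rw [hA]
      have : (⨅ n, (B n).comap f) = (⨅ n, B n).comap f := (Ideal.comap_iInf f B).symm
      rw [this, hBinf, ← RingHom.ker_eq_comap_bot, Ideal.mk_ker]
    obtain ⟨s, hs⟩ := hqc A hAanti k
    refine ⟨s, ?_⟩
    have hBs : B s = (A s).map f := by
      rw [hA, Ideal.map_comap_of_surjective f Ideal.Quotient.mk_surjective]
    rw [hBs, ← aux_map_maximalIdeal I hI, ← Ideal.map_pow]
    calc (A s).map f ≤ ((⨅ n, A n) ⊔ (IsLocalRing.maximalIdeal R) ^ k).map f :=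
          Ideal.map_mono hs
      _ = (I.map f) ⊔ ((IsLocalRing.maximalIdeal R) ^ k).map f := by
          rw [hAinf, Ideal.map_sup]
      _ = ((IsLocalRing.maximalIdeal R) ^ k).map f := by
          rw [Ideal.map_quotient_self, bot_sup_eq]
  · intro hq A hAanti k
    by_cases hJ : (⨅ n, A n) = ⊤
    · exact ⟨0, le_sup_of_le_left (by rw [hJ]; exact le_top)⟩
    · haveI : Nontrivial (R ⧸ (⨅ n, A n)) := Ideal.Quotient.nontrivial_iff.mpr hJ
      haveI : IsLocalRing (R ⧸ (⨅ n, A n)) :=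
        IsLocalRing.of_surjective' (Ideal.Quotient.mk _) Ideal.Quotient.mk_surjective
      set J := ⨅ n, A n with hJdef
      set f := Ideal.Quotient.mk J
      have hfsurj : Function.Surjective f := Ideal.Quotient.mk_surjective
      set B : ℕ → Ideal (R ⧸ J) := fun n => (A n).map f with hB
      have hBanti : Antitone B := fun m n h => Ideal.map_mono (hAanti h)
      have hJle : ∀ n, J ≤ A n := fun n => iInf_le A n
      have hcomapB : ∀ n, (B n).comap f = A n := by
        intro n
        rw [hB]
        rw [Ideal.comap_map_of_surjective f hfsurj, ← RingHom.ker_eq_comap_bot,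
          Ideal.mk_ker, sup_eq_left.mpr (hJle n)]
      have hBinf : (⨅ n, B n) = ⊥ := by
        apply Ideal.comap_injective_of_surjective f hfsurj
        rw [Ideal.comap_iInf]
        simp only [hcomapB]
        exact (Ideal.mk_ker (I := J)).symm.trans (RingHom.ker_eq_comap_bot _)
      obtain ⟨s, hs⟩ := hq J hJ B hBanti hBinf k
      refine ⟨s, ?_⟩
      have h1 : A s ≤ (B s).comap f := (hcomapB s).ge
      have h2 : (B s).comap f ≤ ((IsLocalRing.maximalIdeal (R ⧸ J)) ^ k).comap f :=
        Ideal.comap_mono hs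
      refine le_trans (le_trans h1 h2) ?_
      rw [← aux_map_maximalIdeal J hJ, ← Ideal.map_pow,
        Ideal.comap_map_of_surjective f hfsurj, ← RingHom.ker_eq_comap_bot, Ideal.mk_ker]
      exact sup_le le_sup_right le_sup_left
end

section
/- A Noetherian local integral domain A is weakly quasi-complete if and only if P ∩ A ≠ (0) for every nonzero prime ideal P of the M-adic completion of A. -/
namespace FarleyAux

open AdicCompletion IsLocalRing

section Basic

variable (A : Type*) [CommRing A] [IsLocalRing A]

local notation "M" => IsLocalRing.maximalIdeal A
local notation "φ" => algebraMap A (AdicCompletion (IsLocalRing.maximalIdeal A) A)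

/-- The kernel of evaluation at level `n`, as an ideal of the completion. -/
def K (n : ℕ) : Ideal (AdicCompletion (IsLocalRing.maximalIdeal A) A) where
  carrier := {x | x.val n = 0}
  add_mem' := by
    intro a b ha hb
    simp only [Set.mem_setOf_eq, AdicCompletion.val_add_apply] at *
    rw [ha, hb, add_zero]
  zero_mem' := by simp [AdicCompletion.val_zero]
  smul_mem' := by
    intro c x hx
    simp only [Set.mem_setOf_eq, smul_eq_mul, AdicCompletion.val_mul] at *
    rw [hx, mul_zero]

variable {A}

lemma mem_K {x : AdicCompletion (IsLocalRing.maximalIdeal A) A} {n : ℕ} :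
    x ∈ K A n ↔ x.val n = 0 := Iff.rfl

lemma K_antitone : Antitone (K A) := by
  intro m n hmn x hx
  rw [mem_K] at *
  rw [← x.property hmn, hx, _root_.map_zero]

lemma iInf_K : (⨅ n, K A n) = ⊥ := by
  rw [eq_bot_iff]
  intro x hx
  rw [Submodule.mem_iInf] at hx
  rw [Ideal.mem_bot]
  exact AdicCompletion.ext (fun n => by simpa using mem_K.mp (hx n))

lemma smul_top_pow (n : ℕ) :
    ((IsLocalRing.maximalIdeal A) ^ n • ⊤ : Ideal A) = (IsLocalRing.maximalIdeal A) ^ n := by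
  ext x; simp

lemma val_algebraMap (a : A) (n : ℕ) :
    ((φ) a).val n =
      Submodule.mkQ ((IsLocalRing.maximalIdeal A) ^ n • ⊤ : Ideal A) a := rfl

lemma comap_K (n : ℕ) : (K A n).comap (φ) = (IsLocalRing.maximalIdeal A) ^ n := by
  ext a
  rw [Ideal.mem_comap, mem_K, val_algebraMap]
  rw [Submodule.mkQ_apply, Submodule.Quotient.mk_eq_zero, smul_top_pow]

lemma map_pow_le_K (n : ℕ) :
    ((IsLocalRing.maximalIdeal A) ^ n).map (φ) ≤ K A n := by
  rw [Ideal.map_le_iff_le_comap, comap_K]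

-- density
lemma dense (x : AdicCompletion (IsLocalRing.maximalIdeal A) A) (n : ℕ) :
    ∃ a : A, (x - (φ) a).val n = 0 := by
  obtain ⟨f, rfl⟩ := AdicCompletion.mk_surjective _ A x
  exact ⟨f n, by rw [AdicCompletion.val_sub_apply, sub_eq_zero]; rfl⟩

-- completeness: limit of a Cauchy sequence of elements of A
lemma complete (e : ℕ → A) (he : ∀ j, e (j+1) - e j ∈ (M) ^ j) :
    ∃ w : AdicCompletion (IsLocalRing.maximalIdeal A) A,
      ∀ j, (w - (φ) (e j)).val j = 0 := by
  have hc : ∀ j, e j ≡ e (j+1) [SMOD ((M) ^ j • ⊤ : Submodule A A)] := by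
    intro j
    rw [SModEq.sub_mem]
    have : ((M) ^ j • ⊤ : Ideal A) = (M) ^ j := by ext x; simp
    rw [this]
    simpa using ((M) ^ j).neg_mem (he j)
  refine ⟨AdicCompletion.mk _ A (AdicCauchySequence.mk _ _ e hc), ?_⟩
  intro j
  rw [AdicCompletion.val_sub_apply, sub_eq_zero]
  rfl

lemma K_eq_ker (n : ℕ) :
    (K A n : Ideal (AdicCompletion (IsLocalRing.maximalIdeal A) A)) =
      RingHom.ker (AdicCompletion.evalₐ (M) n) := by
  ext x
  obtain ⟨f, rfl⟩ := AdicCompletion.mk_surjective (M) A x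
  rw [mem_K, RingHom.mem_ker, AdicCompletion.evalₐ_mk]
  have h1 : (AdicCompletion.mk (M) A f).val n =
      Submodule.mkQ ((M) ^ n • ⊤ : Ideal A) (f n) := rfl
  rw [h1, Submodule.mkQ_apply, Submodule.Quotient.mk_eq_zero,
    Ideal.Quotient.eq_zero_iff_mem]
  rw [smul_top_pow]

lemma evalₐ_algebraMap (n : ℕ) (a : A) :
    (AdicCompletion.evalₐ (M) n) ((φ) a) = Ideal.Quotient.mk ((M) ^ n) a := by
  rw [AlgHom.commutes]
  rfl

-- the key comap identity
lemma comap_map_sup_K (I : Ideal A) (j : ℕ) :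
    (Ideal.map (φ) I ⊔ K A j).comap (φ) = I ⊔ (M) ^ j := by
  have hker : RingHom.ker (Ideal.Quotient.mk ((M) ^ j)) = (M) ^ j := Ideal.mk_ker
  apply le_antisymm
  · intro a ha
    rw [Ideal.mem_comap] at ha
    have h1 : (AdicCompletion.evalₐ (M) j) ((φ) a) ∈
        (Ideal.map (φ) I ⊔ K A j).map (AdicCompletion.evalₐ (M) j :
          AdicCompletion (IsLocalRing.maximalIdeal A) A →+* A ⧸ (M) ^ j) :=
      Ideal.mem_map_of_mem _ ha
    have h2 : (Ideal.map (φ) I ⊔ K A j).map (AdicCompletion.evalₐ (M) j :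
        AdicCompletion (IsLocalRing.maximalIdeal A) A →+* A ⧸ (M) ^ j) =
        I.map (Ideal.Quotient.mk ((M) ^ j)) := by
      rw [Ideal.map_sup]
      have h3 : (K A j : Ideal _).map (AdicCompletion.evalₐ (M) j :
          AdicCompletion (IsLocalRing.maximalIdeal A) A →+* A ⧸ (M) ^ j) = ⊥ := by
        rw [K_eq_ker, eq_bot_iff, Ideal.map_le_iff_le_comap]
        intro x hx
        rw [Ideal.mem_comap, Ideal.mem_bot]
        exact hx
      rw [h3, sup_bot_eq, Ideal.map_map]
      have hcomp : ((AdicCompletion.evalₐ (M) j :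
          AdicCompletion (IsLocalRing.maximalIdeal A) A →+* A ⧸ (M) ^ j).comp
          (algebraMap A (AdicCompletion (IsLocalRing.maximalIdeal A) A))) =
          Ideal.Quotient.mk ((M) ^ j) := RingHom.ext (evalₐ_algebraMap j)
      rw [hcomp]
    rw [h2, evalₐ_algebraMap] at h1
    have h4 := Ideal.comap_map_of_surjective (Ideal.Quotient.mk ((M) ^ j))
      Ideal.Quotient.mk_surjective I
    have h5 : a ∈ (I.map (Ideal.Quotient.mk ((M) ^ j))).comap
      (Ideal.Quotient.mk ((M) ^ j)) := h1
    rw [h4, ← RingHom.ker_eq_comap_bot, hker] at h5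
    exact h5
  · rw [sup_le_iff]
    constructor
    · intro a ha
      rw [Ideal.mem_comap]
      exact Ideal.mem_sup_left (Ideal.mem_map_of_mem _ ha)
    · intro a ha
      rw [Ideal.mem_comap]
      apply Ideal.mem_sup_right
      rw [mem_K]
      show (Submodule.mkQ ((M) ^ j • ⊤ : Ideal A)) a = 0
      rw [Submodule.mkQ_apply, Submodule.Quotient.mk_eq_zero, smul_top_pow]
      exact ha

end Basic

section Noeth

variable {A : Type*} [CommRing A] [IsLocalRing A] [IsNoetherianRing A]

local notation "M" => IsLocalRing.maximalIdeal A
local notation "φ" => algebraMap A (AdicCompletion (IsLocalRing.maximalIdeal A) A)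

set_option linter.unusedSectionVars false

lemma isArtinian_of_fg_of_torsion (N : Type*) [AddCommGroup N] [Module A N]
    [Module.Finite A N] (h : ∀ m ∈ (M), ∀ x : N, m • x = 0) : IsArtinian A N := by
  haveI : IsSimpleModule A (A ⧸ (M : Ideal A)) :=
    isSimpleModule_iff_isCoatom.mpr (Ideal.isMaximal_def.mp inferInstance)
  haveI artAM : IsArtinian A (A ⧸ (M : Ideal A)) := inferInstance
  have key : ∀ x : N, IsArtinian A (Submodule.span A {x} : Submodule A N) := by
    intro x
    set f := LinearMap.toSpanSingleton A N x with hf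
    have hker : (M : Ideal A) ≤ LinearMap.ker f := by
      intro m hm
      rw [LinearMap.mem_ker]
      exact h m hm x
    set g := Submodule.liftQ (M : Ideal A) f hker with hg
    have hr : LinearMap.range g = Submodule.span A {x} := by
      rw [Submodule.range_liftQ]
      exact (LinearMap.span_singleton_eq_range A N x).symm
    have hart : IsArtinian A (LinearMap.range g) :=
      isArtinian_of_surjective _ g.rangeRestrict g.surjective_rangeRestrict
    exact hr ▸ hart
  have htop : IsArtinian A (⊤ : Submodule A N) := by
    apply Submodule.fg_induction (motive := fun S _ => IsArtinian A S)
    · exact key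
    · intro N1 N2 _ _ h1 h2
      haveI := h1; haveI := h2
      exact isArtinian_sup N1 N2
    · exact Module.Finite.fg_top
  exact isArtinian_of_linearEquiv (LinearEquiv.ofTop ⊤ rfl)

lemma isArtinian_quotient_pow (j : ℕ) :
    IsArtinian A (A ⧸ ((M) ^ j : Ideal A)) := by
  induction j with
  | zero =>
    have : Subsingleton (A ⧸ ((M) ^ 0 : Ideal A)) := by
      rw [pow_zero, Ideal.one_eq_top]
      exact Submodule.Quotient.subsingleton_iff.mpr rfl
    exact isArtinian_of_finite
  | succ j ih =>
    set S : Submodule A (A ⧸ ((M) ^ (j+1) : Ideal A)) :=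
      Submodule.map (Submodule.mkQ ((M) ^ (j+1) : Ideal A)) ((M) ^ j) with hS
    have hle : ((M) ^ (j+1) : Ideal A) ≤ (M) ^ j := Ideal.pow_le_pow_right (by omega)
    have hq : IsArtinian A ((A ⧸ ((M) ^ (j+1) : Ideal A)) ⧸ S) := by
      have e := Submodule.quotientQuotientEquivQuotient
        ((M) ^ (j+1) : Ideal A) ((M) ^ j : Ideal A) hle
      exact isArtinian_of_linearEquiv e.symm
    have hfg : Module.Finite A S := by
      have : S.FG := IsNoetherian.noetherian S
      exact Module.Finite.iff_fg.mpr this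
    have hSart : IsArtinian A S := by
      apply isArtinian_of_fg_of_torsion
      intro m hm x
      obtain ⟨x, hx⟩ := x
      obtain ⟨b, hb, rfl⟩ := hx
      have h0 : m • (Submodule.mkQ ((M) ^ (j+1) : Ideal A) b) = 0 := by
        rw [← map_smul, Submodule.mkQ_apply, Submodule.Quotient.mk_eq_zero]
        have : m • b ∈ ((M) ^ (j+1) : Ideal A) := by
          rw [smul_eq_mul, pow_succ, mul_comm ((M)^j) (M)]
          exact Ideal.mul_mem_mul hm hb
        exact this
      ext
      simpa using h0
    exact (isArtinian_iff_submodule_quotient S).mpr ⟨hSart, hq⟩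

-- closedness of ideals in A (Krull intersection)
lemma closure_eq (I : Ideal A) : (⨅ j : ℕ, I ⊔ (M) ^ j) = I := by
  apply le_antisymm
  · intro a ha
    rw [Submodule.mem_iInf] at ha
    have hbot : (⨅ i : ℕ, (M) ^ i • ⊤ : Submodule A (A ⧸ I)) = ⊥ :=
      Ideal.iInf_pow_smul_eq_bot_of_isLocalRing (M)
        (Ideal.IsMaximal.ne_top (IsLocalRing.maximalIdeal.isMaximal A))
    have hmem : Submodule.Quotient.mk (p := I) a ∈
        (⨅ i : ℕ, (M) ^ i • ⊤ : Submodule A (A ⧸ I)) := by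
      rw [Submodule.mem_iInf]
      intro i
      obtain ⟨b, hb, m, hm, rfl⟩ := Submodule.mem_sup.mp (ha i)
      have h1 : Submodule.Quotient.mk (p := I) (b + m) =
          Submodule.Quotient.mk (p := I) m := by
        rw [Submodule.Quotient.eq]
        simpa using hb
      rw [h1]
      have h2 : Submodule.Quotient.mk (p := I) m =
          m • (Submodule.Quotient.mk (p := I) (1 : A)) := by
        rw [← Submodule.Quotient.mk_smul]
        congr 1
        simp
      rw [h2]
      exact Submodule.smul_mem_smul hm Submodule.mem_top
    rw [hbot, Submodule.mem_bot] at hmem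
    exact (Submodule.Quotient.mk_eq_zero I).mp hmem
  · exact le_iInf (fun j => le_sup_left)

end Noeth

section Domain

variable {A : Type*} [CommRing A] [IsDomain A] [IsLocalRing A] [IsNoetherianRing A]

local notation "M" => IsLocalRing.maximalIdeal A
local notation "φ" => algebraMap A (AdicCompletion (IsLocalRing.maximalIdeal A) A)

-- Artin-Rees cancellation in a Noetherian domain:
lemma artin_rees_domain (a : A) (ha : a ≠ 0) :
    ∃ c : ℕ, ∀ n ≥ c, ∀ b : A, a * b ∈ (M) ^ n → b ∈ (M) ^ (n - c) := by
  obtain ⟨c, hc⟩ := Ideal.exists_pow_inf_eq_pow_smul (M) (Ideal.span {a})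
  refine ⟨c, fun n hn b hb => ?_⟩
  have h1 : a * b ∈ ((M) ^ n • ⊤ ⊓ Ideal.span {a} : Ideal A) := by
    constructor
    · have : ((M) ^ n • ⊤ : Ideal A) = (M) ^ n := by ext x; simp
      rw [this]; exact hb
    · exact Ideal.mem_span_singleton.mpr ⟨b, rfl⟩
  rw [hc n hn] at h1
  have h2 : a * b ∈ (M) ^ (n - c) • Ideal.span ({a} : Set A) :=
    Submodule.smul_mono le_rfl inf_le_right h1
  obtain ⟨y, hy, hya⟩ := Submodule.mem_smul_span_singleton.mp h2
  have hya' : a * y = a * b := by rw [← hya, smul_eq_mul, mul_comm]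
  have hba : y = b := mul_left_cancel₀ ha hya'
  rw [← hba]; exact hy

-- torsion-freeness of the completion
lemma torsion_free (a : A) (ha : a ≠ 0)
    (x : AdicCompletion (IsLocalRing.maximalIdeal A) A) (hx : (φ) a * x = 0) : x = 0 := by
  obtain ⟨c, hc⟩ := artin_rees_domain a ha
  obtain ⟨f, rfl⟩ := AdicCompletion.mk_surjective _ A x
  have hf : ∀ n, a * f n ∈ (M) ^ n := by
    intro n
    have h0 : ((φ) a * AdicCompletion.mk _ A f).val n = 0 := by rw [hx]; rfl
    rw [AdicCompletion.val_mul] at h0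
    have h2 : (Submodule.mkQ ((M) ^ n • ⊤ : Ideal A)) (a * f n) = 0 := by
      rw [← h0]; rfl
    rw [Submodule.mkQ_apply, Submodule.Quotient.mk_eq_zero, smul_top_pow] at h2
    exact h2
  apply AdicCompletion.ext
  intro j
  rw [AdicCompletion.val_zero]
  have h1 : f (j + c) ∈ (M) ^ j := by
    have := hc (j + c) (by omega) (f (j + c)) (hf (j + c))
    simpa using this
  have h2 : f j - f (j + c) ∈ (M) ^ j := by
    have hp := f.property (show j ≤ j + c by omega)
    rw [SModEq.sub_mem] at hp
    rwa [smul_top_pow] at hp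
  have h3 : f j ∈ (M) ^ j := by
    have := Ideal.add_mem _ h2 h1
    simpa using this
  show (Submodule.mkQ ((M) ^ j • ⊤ : Ideal A)) (f j) = 0
  rw [Submodule.mkQ_apply, Submodule.Quotient.mk_eq_zero, smul_top_pow]
  exact h3

/-- The ideal `{a | x * φ a ∈ K n}`. -/
def Cseq (x : AdicCompletion (IsLocalRing.maximalIdeal A) A) (n : ℕ) : Ideal A where
  carrier := {a | x * (φ) a ∈ K A n}
  add_mem' := by
    intro a b ha hb
    simp only [Set.mem_setOf_eq, map_add, mul_add] at *
    exact Ideal.add_mem _ ha hb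
  zero_mem' := by
    simp only [Set.mem_setOf_eq, _root_.map_zero, mul_zero]
    exact Ideal.zero_mem _
  smul_mem' := by
    intro c a ha
    simp only [Set.mem_setOf_eq, smul_eq_mul, map_mul] at *
    have : x * ((φ) c * (φ) a) = (φ) c * (x * (φ) a) := by ring
    rw [this]
    exact Ideal.mul_mem_left _ _ ha

lemma mem_Cseq {x : AdicCompletion (IsLocalRing.maximalIdeal A) A} {n : ℕ} {a : A} :
    a ∈ Cseq x n ↔ x * (φ) a ∈ K A n := Iff.rfl

-- * direction: weak quasi-completeness implies primes meet
theorem mp_dir (hwqc : IsWeaklyQuasiComplete A)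
    (P : Ideal (AdicCompletion (IsLocalRing.maximalIdeal A) A)) (hP : P.IsPrime)
    (hPne : P ≠ ⊥) :
    P.comap (φ) ≠ ⊥ := by
  intro hcomap
  obtain ⟨x, hxP, hxne⟩ := Submodule.exists_mem_ne_zero_of_ne_bot hPne
  -- choose k with x.val k ≠ 0
  have hk : ∃ k, x.val k ≠ 0 := by
    by_contra h
    push_neg at h
    exact hxne (AdicCompletion.ext (fun n => by rw [h n]; rfl))
  obtain ⟨k, hk⟩ := hk
  have hPzero : ∀ a : A, (φ) a ∈ P → a = 0 := by
    intro a ha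
    have : a ∈ P.comap (φ) := ha
    rwa [hcomap, Ideal.mem_bot] at this
  -- the first sequence
  have hCanti : Antitone (Cseq x) := fun m n hmn a ha => K_antitone hmn ha
  have hCbot : (⨅ n, Cseq x n) = ⊥ := by
    rw [eq_bot_iff]
    intro a ha
    rw [Submodule.mem_iInf] at ha
    rw [Ideal.mem_bot]
    by_contra hane
    have h0 : x * (φ) a ∈ ⨅ n, K A n := (Submodule.mem_iInf _).mpr (fun n => ha n)
    rw [iInf_K, Ideal.mem_bot] at h0
    exact hxne (torsion_free a hane x (by rw [mul_comm]; exact h0))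
  have star := hwqc (Cseq x) hCanti hCbot
  choose s hs using star
  -- (**) : A-points of the closure of (x) lie in (x)
  have key : ∀ b : A, (∀ n, (φ) b ∈ Ideal.span {x} ⊔ K A n) → (φ) b ∈ Ideal.span {x} := by
    intro b hb
    have hdec : ∀ n, ∃ c κ, κ ∈ K A n ∧ (φ) b = c * x + κ := by
      intro n
      obtain ⟨p, hp, κ, hκ, heq⟩ := Submodule.mem_sup.mp (hb n)
      obtain ⟨c, hc⟩ := Ideal.mem_span_singleton'.mp hp
      exact ⟨c, κ, hκ, by rw [← heq, hc]⟩
    choose c κ hκ hbc using hdec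
    choose d hd using fun n => dense (c n) n
    have hgood : ∀ n, (φ) b - x * (φ) (d n) ∈ K A n := by
      intro n
      have heq : (φ) b - x * (φ) (d n) = x * (c n - (φ) (d n)) + κ n := by
        rw [hbc n]; ring
      rw [heq]
      exact Ideal.add_mem _ (Ideal.mul_mem_left _ _ (mem_K.mpr (hd n))) (hκ n)
    -- monotone reindexing
    set t : ℕ → ℕ := fun k' => (Finset.range (k'+1)).sup s + k' with ht
    have hts : ∀ k', s k' ≤ t k' := by
      intro k'
      exact le_add_of_le_of_nonneg
        (Finset.le_sup (Finset.mem_range.mpr (by omega))) (by omega)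
    have htmono : Monotone t := by
      intro i j hij
      have h1 : (Finset.range (i+1)).sup s ≤ (Finset.range (j+1)).sup s :=
        Finset.sup_mono (Finset.range_subset_range.mpr (by omega))
      simp only [ht]
      omega
    have htk : ∀ k', k' ≤ t k' := fun k' => by simp only [ht]; omega
    set e : ℕ → A := fun k' => d (t k') with he
    have hcauchy : ∀ k', e (k'+1) - e k' ∈ (M) ^ k' := by
      intro k'
      have h1 : x * (φ) (e (k'+1) - e k') ∈ K A (s k') := by
        have heq : x * (φ) (e (k'+1) - e k') =
            ((φ) b - x * (φ) (e k')) - ((φ) b - x * (φ) (e (k'+1))) := by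
          rw [map_sub]; ring
        rw [heq]
        apply Ideal.sub_mem
        · exact K_antitone (hts k') (hgood (t k'))
        · exact K_antitone ((hts k').trans (htmono (by omega))) (hgood (t (k'+1)))
      exact hs k' h1
    obtain ⟨w, hw⟩ := complete e hcauchy
    have hsub : ∀ j, (φ) b - x * w ∈ K A j := by
      intro j
      have h1 : (φ) b - x * (φ) (e j) ∈ K A j := K_antitone (htk j) (hgood (t j))
      have h2 : x * ((φ) (e j) - w) ∈ K A j := by
        apply Ideal.mul_mem_left
        have h3 := mem_K.mpr (hw j)
        have hneg := (K A j).neg_mem h3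
        simpa using hneg
      have heq : (φ) b - x * w = ((φ) b - x * (φ) (e j)) + x * ((φ) (e j) - w) := by
        ring
      rw [heq]; exact Ideal.add_mem _ h1 h2
    have hzero : (φ) b - x * w = 0 := by
      have hm : (φ) b - x * w ∈ ⨅ j, K A j := Submodule.mem_iInf _ |>.mpr hsub
      rwa [iInf_K, Ideal.mem_bot] at hm
    exact Ideal.mem_span_singleton'.mpr ⟨w, by rw [mul_comm]; exact (sub_eq_zero.mp hzero).symm⟩
  -- final sequence
  set D : ℕ → Ideal A := fun n => (Ideal.span {x} ⊔ K A n).comap (φ) with hD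
  have hDanti : Antitone D :=
    fun m n hmn => Ideal.comap_mono (sup_le_sup_left (K_antitone hmn) _)
  have hDbot : (⨅ n, D n) = ⊥ := by
    rw [eq_bot_iff]; intro a ha
    rw [Submodule.mem_iInf] at ha
    have h1 : (φ) a ∈ Ideal.span {x} := key a (fun n => ha n)
    have h2 : (φ) a ∈ P := by
      have hsle : Ideal.span ({x} : Set (AdicCompletion (IsLocalRing.maximalIdeal A) A)) ≤ P :=
        Ideal.span_le.mpr (by simpa using hxP)
      exact hsle h1
    rw [Ideal.mem_bot]; exact hPzero a h2
  obtain ⟨s0, hs0⟩ := hwqc D hDanti hDbot k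
  obtain ⟨a, ha⟩ := dense x (max s0 k)
  have haD : a ∈ D (max s0 k) := by
    rw [hD]
    show (φ) a ∈ Ideal.span {x} ⊔ K A (max s0 k)
    have heq : (φ) a = x - (x - (φ) a) := by ring
    rw [heq]
    exact Ideal.sub_mem _ (Ideal.mem_sup_left (Ideal.mem_span_singleton_self x))
      (Ideal.mem_sup_right (mem_K.mpr ha))
  have haM : a ∈ (M) ^ k := hs0 (hDanti (le_max_left s0 k) haD)
  have hphia : (φ) a ∈ K A k := by rw [← Ideal.mem_comap, comap_K]; exact haM
  have hxk : x ∈ K A k := by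
    have heq : x = (x - (φ) a) + (φ) a := by ring
    rw [heq]
    exact Ideal.add_mem _ (K_antitone (le_max_right s0 k) (mem_K.mpr ha)) hphia
  exact hk (mem_K.mp hxk)

-- * direction: primes meeting implies weak quasi-completeness
theorem mpr_dir
    (hprimes : ∀ P : Ideal (AdicCompletion (IsLocalRing.maximalIdeal A) A), P.IsPrime →
      P ≠ ⊥ → P.comap (φ) ≠ ⊥) :
    IsWeaklyQuasiComplete A := by
  intro Aseq hanti hbot k
  by_contra hno
  rw [not_exists] at hno
  -- stabilization of Aseq n ⊔ M^j
  have stab : ∀ j : ℕ, ∃ N, ∀ n, N ≤ n → Aseq n ⊔ (M) ^ j = Aseq N ⊔ (M) ^ j := by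
    intro j
    haveI := isArtinian_quotient_pow (A := A) j
    have hmono : Monotone (fun n => OrderDual.toDual
        (Submodule.map (Submodule.mkQ ((M) ^ j : Ideal A)) (Aseq n))) := by
      intro m n hmn
      exact Submodule.map_mono (hanti hmn)
    obtain ⟨N, hN⟩ := IsArtinian.monotone_stabilizes
      ⟨fun n => OrderDual.toDual (Submodule.map (Submodule.mkQ ((M) ^ j : Ideal A)) (Aseq n)),
        hmono⟩
    refine ⟨N, fun n hn => ?_⟩
    have heq : Submodule.map (Submodule.mkQ ((M) ^ j : Ideal A)) (Aseq N) =
        Submodule.map (Submodule.mkQ ((M) ^ j : Ideal A)) (Aseq n) :=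
      congrArg OrderDual.ofDual (hN n hn)
    have hcom : ∀ m : ℕ, Submodule.comap (Submodule.mkQ ((M) ^ j : Ideal A))
        (Submodule.map (Submodule.mkQ ((M) ^ j : Ideal A)) (Aseq m)) =
        Aseq m ⊔ (M) ^ j := by
      intro m
      rw [Submodule.comap_map_eq, Submodule.ker_mkQ]
    rw [← hcom n, ← hcom N, heq]
  choose Nf hNf using stab
  set E : ℕ → Ideal A := fun j => Aseq (Nf j) ⊔ (M) ^ j with hE
  have hE_eq : ∀ j n, Nf j ≤ n → E j = Aseq n ⊔ (M) ^ j :=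
    fun j n hn => (hNf j n hn).symm
  have hE_le : ∀ j n, E j ≤ Aseq n ⊔ (M) ^ j := by
    intro j n
    rcases le_total n (Nf j) with h | h
    · exact sup_le_sup_right (hanti h) _
    · exact (hE_eq j n h).le
  have hE_step : ∀ j, E j ≤ E (j+1) ⊔ (M) ^ j := by
    intro j
    have h1 : E j = Aseq (max (Nf j) (Nf (j+1))) ⊔ (M) ^ j := hE_eq j _ (le_max_left _ _)
    have h2 : E (j+1) = Aseq (max (Nf j) (Nf (j+1))) ⊔ (M) ^ (j+1) :=
      hE_eq (j+1) _ (le_max_right _ _)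
    rw [h1, h2]
    exact sup_le (le_sup_of_le_left le_sup_left) le_sup_right
  have hE_not : ∀ j, ∃ a ∈ E j, a ∉ (M) ^ k := by
    intro j
    obtain ⟨a, ha, hna⟩ := SetLike.not_le_iff_exists.mp (hno (Nf j))
    exact ⟨a, Ideal.mem_sup_left ha, hna⟩
  -- build the sequence b
  have step : ∀ i (a : A), a ∈ E (k+i) → ∃ a', a' ∈ E (k+i+1) ∧ a - a' ∈ (M) ^ (k+i) := by
    intro i a ha
    have h1 : a ∈ E (k+i+1) ⊔ (M) ^ (k+i) := hE_step (k+i) ha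
    obtain ⟨p, hp, m, hm, heq⟩ := Submodule.mem_sup.mp h1
    exact ⟨p, hp, by rw [← heq]; simpa using hm⟩
  obtain ⟨a0, ha0, ha0n⟩ := hE_not k
  let bs : (i : ℕ) → {a : A // a ∈ E (k+i)} := fun i =>
    Nat.rec ⟨a0, by simpa using ha0⟩
      (fun i p => ⟨Classical.choose (step i p.1 p.2),
        (Classical.choose_spec (step i p.1 p.2)).1⟩) i
  set b : ℕ → A := fun i => (bs i).1 with hb
  have hb_mem : ∀ i, b i ∈ E (k+i) := fun i => (bs i).2
  have hb_diff : ∀ i, b i - b (i+1) ∈ (M) ^ (k+i) :=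
    fun i => (Classical.choose_spec (step i (bs i).1 (bs i).2)).2
  have hb_not : ∀ i, b i ∉ (M) ^ k := by
    intro i
    induction i with
    | zero => exact ha0n
    | succ i ih =>
      intro hmem
      apply ih
      have hd : b i - b (i+1) ∈ (M) ^ k :=
        Ideal.pow_le_pow_right (by omega) (hb_diff i)
      have heq : b i = (b i - b (i+1)) + b (i+1) := by ring
      rw [heq]
      exact Ideal.add_mem _ hd hmem
  -- the Cauchy sequence
  set f : ℕ → A := fun j => b (j - k) with hf
  have hfc : ∀ j, f (j+1) - f j ∈ (M) ^ j := by
    intro j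
    rcases lt_or_ge j k with h | h
    · have h1 : j + 1 - k = 0 := by omega
      have h2 : j - k = 0 := by omega
      simp only [hf, h1, h2, sub_self]
      exact Ideal.zero_mem _
    · have h1 : j + 1 - k = (j - k) + 1 := by omega
      have h2 : k + (j - k) = j := by omega
      simp only [hf, h1]
      have := ((M) ^ (k + (j-k))).neg_mem (hb_diff (j - k))
      rw [h2] at this
      simpa using this
  obtain ⟨x, hx⟩ := complete f hfc
  -- x is nonzero at level k
  have hxk : x.val k ≠ 0 := by
    have h1 : x.val k = ((φ) (f k)).val k := by
      have := hx k
      rw [AdicCompletion.val_sub_apply, sub_eq_zero] at this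
      exact this
    intro h0
    rw [h0] at h1
    have h2 : f k ∈ (M) ^ k := by
      have := h1.symm
      rw [val_algebraMap, Submodule.mkQ_apply, Submodule.Quotient.mk_eq_zero,
        smul_top_pow] at this
      exact this
    have : f k = b 0 := by simp [hf]
    rw [this] at h2
    exact hb_not 0 h2
  have hxne : x ≠ 0 := fun h => hxk (by rw [h]; rfl)
  -- x is in all B n ⊔ K j
  have hxmem : ∀ n j : ℕ, x ∈ (Aseq n).map (φ) ⊔ K A j := by
    intro n j
    have hsup : (Aseq n).map (φ) ⊔ K A (max j k) ≤ (Aseq n).map (φ) ⊔ K A j :=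
      sup_le_sup_left (K_antitone (le_max_left j k)) _
    apply hsup
    set j' := max j k with hj'
    have hkj' : k ≤ j' := le_max_right j k
    have hfj : f j' ∈ E j' := by
      have h1 : k + (j' - k) = j' := by omega
      have := hb_mem (j' - k)
      rw [h1] at this
      exact this
    have h1 : f j' ∈ Aseq n ⊔ (M) ^ j' := hE_le j' n hfj
    have h2 : (φ) (f j') ∈ (Aseq n).map (φ) ⊔ K A j' := by
      obtain ⟨p, hp, m, hm, heq⟩ := Submodule.mem_sup.mp h1
      rw [← heq, map_add]
      apply Ideal.add_mem
      · exact Ideal.mem_sup_left (Ideal.mem_map_of_mem _ hp)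
      · apply Ideal.mem_sup_right
        rw [← Ideal.mem_comap, comap_K]
        exact hm
    have h3 : x - (φ) (f j') ∈ K A j' := mem_K.mpr (hx j')
    have heq : x = (φ) (f j') + (x - (φ) (f j')) := by ring
    rw [heq]
    exact Ideal.add_mem _ h2 (Ideal.mem_sup_right h3)
  -- the ideal and its disjointness from nonzero elements of A
  set Jid : Ideal (AdicCompletion (IsLocalRing.maximalIdeal A) A) :=
    ⨅ p : ℕ × ℕ, ((Aseq p.1).map (φ) ⊔ K A p.2) with hJid
  have hxJ : x ∈ Jid := (Submodule.mem_iInf _).mpr (fun p => hxmem p.1 p.2)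
  set S : Submonoid (AdicCompletion (IsLocalRing.maximalIdeal A) A) :=
    Submonoid.map ((φ) : A →+* _) (nonZeroDivisors A) with hSdef
  have hdisj : Disjoint (Jid : Set (AdicCompletion (IsLocalRing.maximalIdeal A) A)) S := by
    rw [Set.disjoint_left]
    rintro y hy ⟨a, haS, rfl⟩
    have hane : a ≠ 0 := nonZeroDivisors.ne_zero haS
    have hmem : ∀ n j : ℕ, a ∈ Aseq n ⊔ (M) ^ j := by
      intro n j
      have h1 : (φ) a ∈ (Aseq n).map (φ) ⊔ K A j :=
        (Submodule.mem_iInf _).mp hy (n, j)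
      rw [← comap_map_sup_K (Aseq n) j]
      exact h1
    have han : ∀ n, a ∈ Aseq n := by
      intro n
      have h1 : a ∈ ⨅ j : ℕ, (Aseq n ⊔ (M) ^ j) :=
        (Submodule.mem_iInf _).mpr (hmem n)
      rwa [closure_eq] at h1
    have h2 : a ∈ (⨅ n, Aseq n : Ideal A) := (Submodule.mem_iInf _).mpr han
    rw [hbot, Ideal.mem_bot] at h2
    exact hane h2
  obtain ⟨P, hPprime, hJP, hPdisj⟩ := Ideal.exists_le_prime_disjoint Jid S hdisj
  have hPne : P ≠ ⊥ := by
    intro h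
    have : x ∈ (⊥ : Ideal (AdicCompletion (IsLocalRing.maximalIdeal A) A)) := h ▸ hJP hxJ
    rw [Ideal.mem_bot] at this
    exact hxne this
  have hcom : P.comap (φ) = ⊥ := by
    rw [eq_bot_iff]
    intro a ha
    rw [Ideal.mem_bot]
    by_contra hane
    have h1 : (φ) a ∈ S := ⟨a, mem_nonZeroDivisors_of_ne_zero hane, rfl⟩
    exact Set.disjoint_left.mp hPdisj (Ideal.mem_comap.mp ha) h1
  exact hprimes P hPprime hPne hcom

end Domain

end FarleyAux

/-- Farley's criterion: a Noetherian local integral domain `A` is weakly quasi-complete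
iff every nonzero prime ideal of the `M`-adic completion of `A` contracts to a nonzero
ideal of `A`. -/
theorem isWeaklyQuasiComplete_iff_primes_meet
    (A : Type*) [CommRing A] [IsDomain A] [IsLocalRing A] [IsNoetherianRing A] :
    IsWeaklyQuasiComplete A ↔
      ∀ P : Ideal (AdicCompletion (IsLocalRing.maximalIdeal A) A), P.IsPrime → P ≠ ⊥ →
        P.comap (algebraMap A (AdicCompletion (IsLocalRing.maximalIdeal A) A)) ≠ ⊥ := by
  constructor
  · intro h P hP hPne
    exact FarleyAux.mp_dir h P hP hPne
  · intro h
    exact FarleyAux.mpr_dir h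
end
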